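/- arXiv:1009.3476 — 3 statements merged into one kernel-verified Lean document; each statement's English description precedes it below -/
import Mathlib

section
/- For arbitrary n×n matrices C_1,…,C_n over A, one has the equality of operators A_n·⟨C_1,…,C_n⟩ = A_n·⟨⟨C_1,…,C_n⟩⟩. (In the paper this shows that the antisymmetrized product defining the Sklyanin determinant may be computed with the simpler factors Π_k in place of the products of R-matrices.) -/
/-!
STATEMENT 0: For arbitrary n×n matrices C_1,…,C_n over A,
A_n·⟨C_1,…,C_n⟩ = A_n·⟨⟨C_1,…,C_n⟩⟩.
Operators on the n-fold tensor power of K^n (K = RatFunc ℚ) with coefficients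
in a K-algebra A are modeled as matrices indexed by tuples f : Fin n → Fin n,
where the point `i : Fin n` carries the label `i+1 ∈ {1,…,n}`.
-/

noncomputable section

abbrev K : Type := RatFunc ℚ

/-- The variable u. -/
def u : K := RatFunc.X

/-- Operators on the n-fold tensor power of K^n with coefficients in A. -/
abbrev Op (A : Type*) (n : ℕ) := Matrix (Fin n → Fin n) (Fin n → Fin n) A

variable {A : Type*} [Ring A] [Algebra K A] {n : ℕ}

/-- `act C s` = C^(s): the matrix C acting on the s-th tensor factor. -/
def act (C : Matrix (Fin n) (Fin n) A) (s : Fin n) : Op A n :=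
  fun f g => if ∀ t, t ≠ s → f t = g t then C (f s) (g s) else 0

/-- `Pop σ` = P_σ: permutation of the tensor factors according to σ. -/
def Pop (σ : Equiv.Perm (Fin n)) : Op A n :=
  fun f g => if f = g ∘ ⇑σ⁻¹ then (1 : A) else 0

/-- P_{ij} (with P_{ii} = Id). -/
def Pij (i j : Fin n) : Op A n := Pop (Equiv.swap i j)

/-- R_{ij} = 1 − (2u−i−j+2)⁻¹ P_{ij}, where i, j carry labels i+1, j+1. -/
def Rop (i j : Fin n) : Op A n :=
  (1 : Op A n) -
    ((2 * u - ((i : ℕ) + 1 : K) - ((j : ℕ) + 1 : K) + 2)⁻¹ : K) • Pij i j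

/-- Π_k = 1 − (2u−k−n+2)⁻¹ ∑_{i=k+1}^n P_{ki}, where k carries the label k+1. -/
def Piop (k : Fin n) : Op A n :=
  (1 : Op A n) -
    ((2 * u - ((k : ℕ) + 1 : K) - (n : K) + 2)⁻¹ : K) •
      ∑ i ∈ Finset.univ.filter (fun i => k < i), Pij k i

/-- The antisymmetrizer A_n = ∑_{σ ∈ S_n} sgn(σ) P_σ. -/
def antisym : Op A n :=
  ∑ σ : Equiv.Perm (Fin n), (((Equiv.Perm.sign σ : ℤ) : K)) • Pop σ

/-- The ordered product R_{k,k+1} R_{k,k+2} ⋯ R_{k,n} (equal to 1 for k = n). -/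
def Rrow (k : Fin n) : Op A n :=
  (((List.finRange n).filter (fun i => decide (k < i))).map (fun i => Rop k i)).prod

/-- ⟨C_1,…,C_n⟩ = C_1^(1)·(R_{12}⋯R_{1n})·C_2^(2)·(R_{23}⋯R_{2n})⋯C_n^(n). -/
def bra (C : Fin n → Matrix (Fin n) (Fin n) A) : Op A n :=
  ((List.finRange n).map (fun s => act (C s) s * Rrow s)).prod

/-- ⟨⟨C_1,…,C_n⟩⟩ = C_1^(1)·Π_1·C_2^(2)·Π_2⋯Π_{n−1}·C_n^(n). -/
def braket (C : Fin n → Matrix (Fin n) (Fin n) A) : Op A n :=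
  ((List.finRange n).map (fun s => act (C s) s * Piop s)).prod

lemma Pop_mul (σ τ : Equiv.Perm (Fin n)) : (Pop σ : Op A n) * Pop τ = Pop (σ * τ) := by
  ext f g
  rw [Matrix.mul_apply]
  simp only [Pop, mul_ite, ite_mul, one_mul, mul_one, mul_zero, zero_mul]
  rw [Finset.sum_eq_single (g ∘ ⇑τ⁻¹)]
  · have hcomp : (g ∘ ⇑τ⁻¹) ∘ ⇑σ⁻¹ = g ∘ ⇑(σ * τ)⁻¹ := by
      rw [mul_inv_rev]; rfl
    rw [hcomp]; simp
  · intro h _ hne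
    simp [if_neg hne]
    exact fun h1 _ => absurd h1 hne
  · simp

lemma Pop_mul_act (τ : Equiv.Perm (Fin n)) (C : Matrix (Fin n) (Fin n) A) (s : Fin n) :
    (Pop τ : Op A n) * act C s = act C (τ s) * Pop τ := by
  ext f g
  rw [Matrix.mul_apply, Matrix.mul_apply]
  rw [Finset.sum_eq_single (f ∘ ⇑τ)] ; rotate_left
  · intro h _ hne
    rw [Pop]
    simp only [ite_mul, one_mul, zero_mul, ite_eq_right_iff]
    intro hf
    exact absurd (by funext x; simpa using (congrFun hf (τ x)).symm) hne
  · simp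
  rw [Finset.sum_eq_single (g ∘ ⇑τ⁻¹)] ; rotate_left
  · intro h _ hne
    rw [Pop]
    simp only [mul_ite, mul_one, mul_zero, ite_eq_right_iff]
    intro hf; exact absurd hf hne
  · simp
  have h1 : (Pop τ : Op A n) f (f ∘ ⇑τ) = 1 := by
    have : f ∘ ⇑τ ∘ ⇑τ⁻¹ = f := by ext x; simp
    rw [Pop]; simp [Function.comp_assoc, this]
  have h2 : (Pop τ : Op A n) (g ∘ ⇑τ⁻¹) g = 1 := by
    rw [Pop]; simp
  rw [h1, h2, one_mul, mul_one, act, act]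
  by_cases hc : ∀ t, t ≠ s → (f ∘ ⇑τ) t = g t
  · rw [if_pos hc, if_pos]
    · simp
    · intro t ht
      have := hc (τ⁻¹ t) (by intro h; apply ht; rw [← h]; simp)
      simpa using this
  · rw [if_neg hc, if_neg]
    intro hc'
    apply hc
    intro t ht
    have := hc' (τ t) (by intro h; apply ht; simpa using (Equiv.injective τ) (by simpa using h))
    simpa using this

def sgnK (τ : Equiv.Perm (Fin n)) : K := ((Equiv.Perm.sign τ : ℤ) : K)

lemma sgnK_mul (σ τ : Equiv.Perm (Fin n)) : sgnK (σ * τ) = sgnK σ * sgnK τ := by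
  simp [sgnK, ← Int.cast_mul]

lemma antisym_mul_Pop (τ : Equiv.Perm (Fin n)) :
    (antisym : Op A n) * Pop τ = sgnK τ • antisym := by
  rw [antisym, Finset.sum_mul, Finset.smul_sum]
  apply Fintype.sum_equiv (Equiv.mulRight τ)
  intro σ
  rw [smul_mul_assoc, Pop_mul, smul_smul]
  simp only [Equiv.coe_mulRight]
  congr 1
  show sgnK σ = sgnK τ * sgnK (σ * τ)
  have h2 : sgnK (τ : Equiv.Perm (Fin n)) * sgnK τ = 1 := by
    simp [sgnK, ← Int.cast_mul, Int.units_mul_self]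
  rw [sgnK_mul, mul_comm (sgnK σ), ← mul_assoc, h2, one_mul]

/-! ### lists and finsets of suffix indices -/

def lsuf (n j : ℕ) : List (Fin n) := (List.finRange n).filter (fun i => decide (j ≤ i.val))

def fsuf (n j : ℕ) : Finset (Fin n) := Finset.univ.filter (fun i => j ≤ i.val)

lemma mem_lsuf {j : ℕ} {a : Fin n} : a ∈ lsuf n j ↔ j ≤ a.val := by
  simp [lsuf]

lemma lsuf_sorted (j : ℕ) : (lsuf n j).Pairwise (· ≤ ·) :=
  ((List.pairwise_lt_finRange n).sublist List.filter_sublist).imp le_of_lt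

lemma lsuf_nodup (j : ℕ) : (lsuf n j).Nodup :=
  (List.nodup_finRange n).sublist List.filter_sublist

lemma lsuf_nil {j : ℕ} (h : n ≤ j) : lsuf n j = [] := by
  rw [lsuf, List.filter_eq_nil_iff]
  intro a _
  simp only [decide_eq_true_eq]
  omega

lemma lsuf_cons {j : ℕ} (h : j < n) : lsuf n j = ⟨j, h⟩ :: lsuf n (j + 1) := by
  apply List.Perm.eq_of_pairwise' (r := (· ≤ ·)) (lsuf_sorted j) ?_ ?_
  · refine List.Pairwise.cons ?_ (lsuf_sorted (j+1))
    intro b hb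
    have := mem_lsuf.1 hb
    exact le_of_lt (by exact Fin.mk_lt_of_lt_val (by omega))
  · apply (List.perm_ext_iff_of_nodup (lsuf_nodup j) ?_).2
    · intro a
      rw [mem_lsuf, List.mem_cons, mem_lsuf, Fin.ext_iff]
      simp only [Fin.val_mk]
      omega
    · refine List.Nodup.cons ?_ (lsuf_nodup (j+1))
      intro hmem
      have := mem_lsuf.1 hmem
      simp only [Fin.val_mk] at this
      omega

lemma mem_fsuf {j : ℕ} {a : Fin n} : a ∈ fsuf n j ↔ j ≤ a.val := by
  simp [fsuf]

lemma fsuf_empty {j : ℕ} (h : n ≤ j) : fsuf n j = ∅ := by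
  ext a; rw [mem_fsuf]; simp; omega

lemma fsuf_insert {j : ℕ} (h : j < n) : fsuf n j = insert ⟨j, h⟩ (fsuf n (j + 1)) := by
  ext a
  rw [mem_fsuf, Finset.mem_insert, mem_fsuf, Fin.ext_iff]
  simp only [Fin.val_mk]
  omega

lemma mk_not_mem_fsuf {j : ℕ} (h : j < n) : (⟨j, h⟩ : Fin n) ∉ fsuf n (j + 1) := by
  rw [mem_fsuf]; simp only [Fin.val_mk]; omega

lemma card_fsuf (j : ℕ) : (fsuf n j).card = n - j := by
  have key : ∀ m : ℕ, ((Finset.range m).filter (fun i => j ≤ i)).card = m - j := by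
    intro m
    induction m with
    | zero => simp
    | succ m ih =>
      rw [Finset.range_add_one, Finset.filter_insert]
      by_cases hjm : j ≤ m
      · rw [if_pos hjm, Finset.card_insert_of_notMem (by simp), ih]
        omega
      · rw [if_neg hjm, ih]
        omega
  rw [← key n]
  apply Finset.card_bij (fun (a : Fin n) _ => a.val)
  · intro a ha
    simp only [Finset.mem_filter, Finset.mem_range]
    exact ⟨a.isLt, mem_fsuf.1 ha⟩
  · intro a _ b _ hab
    exact Fin.ext hab
  · intro b hb
    simp only [Finset.mem_filter, Finset.mem_range] at hb
    exact ⟨⟨b, hb.1⟩, mem_fsuf.2 hb.2, rfl⟩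

/-! ### nonvanishing of denominators -/

lemma denom_ne_zero (a b : ℕ) : (2 * u - (a : K) - (b : K) + 2 : K) ≠ 0 := by
  have key : (2 * u - (a : K) - (b : K) + 2 : K) =
      algebraMap (Polynomial ℚ) K (2 * Polynomial.X - (a : Polynomial ℚ) - (b : Polynomial ℚ) + 2) := by
    rw [u]
    push_cast
    simp [RatFunc.algebraMap_X, map_ofNat]
  rw [key]
  apply RatFunc.algebraMap_ne_zero
  intro hP
  have := congrArg (fun p => Polynomial.coeff p 1) hP
  simp [Polynomial.coeff_one, Polynomial.coeff_natCast_ite] at this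

lemma inv_telescope (x y : K) (t : ℕ) (hx : x ≠ 0) (hy : y ≠ 0) (h : x = y + t) :
    x⁻¹ * (1 + y⁻¹ * t) = y⁻¹ := by
  have h1 : 1 + y⁻¹ * t = y⁻¹ * x := by
    rw [h, mul_add, inv_mul_cancel₀ hy]
  rw [h1, mul_comm y⁻¹ x, ← mul_assoc, inv_mul_cancel₀ hx, one_mul]

lemma swap_comm_of_fixed {τ : Equiv.Perm (Fin n)} {a b : Fin n} (ha : τ a = a) (hb : τ b = b) :
    Equiv.swap a b * τ = τ * Equiv.swap a b := by
  rw [Equiv.mul_swap_eq_swap_mul, ha, hb]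

lemma swap_swap_eq {s j i : Fin n} (hsi : s ≠ i) (hji : j ≠ i) :
    Equiv.swap s j * Equiv.swap s i = Equiv.swap j i * Equiv.swap s j := by
  rw [Equiv.mul_swap_eq_swap_mul (Equiv.swap s j) s i, Equiv.swap_apply_left,
    Equiv.swap_apply_of_ne_of_ne hsi.symm hji.symm]

lemma RL (s : Fin n) (t : ℕ) : ∀ j : ℕ, n ≤ j + t → s.val < j →
    ∀ W : Op A n,
    (∀ τ : Equiv.Perm (Fin n), (∀ x : Fin n, x.val < j → τ x = x) → W * Pop τ = sgnK τ • W) →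
    W * ((lsuf n j).map (fun i => Rop s i)).prod
      = W * (1 - ((2 * u - ((s : ℕ) + 1 : K) - (n : K) + 2)⁻¹ : K) • ∑ i ∈ fsuf n j, Pij s i) := by
  induction t with
  | zero =>
    intro j hj _ W _
    rw [lsuf_nil (by omega), fsuf_empty (by omega)]
    simp
  | succ t ih =>
    intro j hj hsj W hW
    by_cases hn : n ≤ j + t
    · exact ih j hn hsj W hW
    push_neg at hn
    have hjn : j < n := by omega
    have hnval : n = j + t + 1 := by omega
    set sj : Fin n := ⟨j, hjn⟩ with hsjdef
    set d : K := (2 * u - ((s : ℕ) + 1 : K) - (n : K) + 2)⁻¹ with hd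
    set c : K := (2 * u - ((s : ℕ) + 1 : K) - ((sj : ℕ) + 1 : K) + 2)⁻¹ with hc
    have hsval : (s : ℕ) < j := hsj
    have hs_ne : s ≠ sj := by
      intro h; rw [hsjdef] at h; apply absurd (congrArg Fin.val h); simp; omega
    -- scalar identity
    have hscal : c * (1 + d * (t : K)) = d := by
      rw [hc, hd]
      apply inv_telescope _ _ t
      · have := denom_ne_zero ((s : ℕ) + 1) ((sj : ℕ) + 1)
        push_cast at this ⊢
        convert this using 2 <;> ring
      · have := denom_ne_zero ((s : ℕ) + 1) n
        push_cast at this ⊢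
        convert this using 2 <;> ring
      · simp only [hsjdef, Fin.val_mk]
        have hnK : (n : K) = (j : K) + (t : K) + 1 := by
          rw [hnval]; push_cast; ring
        rw [hnK]
        ring
    -- hypotheses for IH applications
    have hWfix : ∀ τ : Equiv.Perm (Fin n), (∀ x : Fin n, x.val < j + 1 → τ x = x) →
        W * Pop τ = sgnK τ • W :=
      fun τ hτ => hW τ (fun x hx => hτ x (by omega))
    have hW' : ∀ τ : Equiv.Perm (Fin n), (∀ x : Fin n, x.val < j + 1 → τ x = x) →
        (W * Pij s sj) * Pop τ = sgnK τ • (W * Pij s sj) := by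
      intro τ hτ
      have hτs : τ s = s := hτ s (by omega)
      have hτj : τ sj = sj := hτ sj (by simp [hsjdef])
      rw [mul_assoc, Pij, Pop_mul, swap_comm_of_fixed hτs hτj, ← Pop_mul, ← mul_assoc,
        hW τ (fun x hx => hτ x (by omega)), smul_mul_assoc]
    have IH1 := ih (j + 1) (by omega) (by omega) W hWfix
    have IH2 := ih (j + 1) (by omega) (by omega) (W * Pij s sj) hW'
    -- the sum collapse
    have hsum : (W * Pij s sj) * (∑ i ∈ fsuf n (j + 1), Pij s i)
        = ((t : K) * (-1)) • (W * Pij s sj) := by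
      rw [Finset.mul_sum]
      have hterm : ∀ i ∈ fsuf n (j + 1), W * Pij s sj * Pij s i
          = (-1 : K) • (W * Pij s sj) := by
        intro i hi
        have hival : j + 1 ≤ i.val := mem_fsuf.1 hi
        have hsi : s ≠ i := by
          intro h; apply absurd (congrArg Fin.val h); omega
        have hji : sj ≠ i := by
          intro h; have := congrArg Fin.val h; simp [hsjdef] at this; omega
        simp only [Pij]
        rw [mul_assoc, Pop_mul, swap_swap_eq hsi hji, ← Pop_mul, ← mul_assoc]
        have hfix : ∀ x : Fin n, x.val < j → Equiv.swap sj i x = x := by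
          intro x hx
          apply Equiv.swap_apply_of_ne_of_ne
          · intro h; subst h; simp [hsjdef] at hx
          · intro h; subst h; omega
        rw [hW _ hfix, smul_mul_assoc]
        congr 1
        rw [sgnK, Equiv.Perm.sign_swap hji]
        simp
      rw [Finset.sum_congr rfl hterm, Finset.sum_const, card_fsuf,
        ← Nat.cast_smul_eq_nsmul K, smul_smul]
      have hnt : n - (j + 1) = t := by omega
      rw [hnt]
    -- expand the list product
    rw [lsuf_cons hjn, List.map_cons, List.prod_cons, ← mul_assoc]
    have hWR : W * Rop s sj = W - c • (W * Pij s sj) := by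
      rw [Rop, mul_sub, mul_one, Matrix.mul_smul]
    rw [hWR, Matrix.sub_mul, Matrix.smul_mul, IH1, IH2]
    rw [fsuf_insert hjn, Finset.sum_insert (mk_not_mem_fsuf hjn), ← hsjdef]
    rw [mul_sub, mul_sub, mul_one, mul_one, Matrix.mul_smul, Matrix.mul_smul, hsum]
    rw [smul_add, mul_sub, mul_one, mul_add, Matrix.mul_smul, Matrix.mul_smul]
    rw [smul_smul d]
    have hx : W * Pij s sj - (d * ((t : K) * -1)) • (W * Pij s sj)
        = (1 - d * ((t : K) * -1)) • (W * Pij s sj) := by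
      rw [sub_smul, one_smul]
    rw [hx, smul_smul]
    have hc2 : c * (1 - d * ((t : K) * -1)) = d := by linear_combination hscal
    rw [hc2, sub_sub, add_comm (d • (W * ∑ i ∈ fsuf n (j + 1), Pij s i))]

/-! ### the prefix products and their antisymmetry -/

def Pre (C : Fin n → Matrix (Fin n) (Fin n) A) (m : ℕ) : Op A n :=
  (((List.finRange n).take m).map (fun s => act (C s) s * Piop s)).prod

lemma finRange_getElem (m : ℕ) (h : m < n) :
    (List.finRange n)[m]'(by simpa using h) = (⟨m, h⟩ : Fin n) := by
  apply Fin.ext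
  simp

lemma perm_stab {k : Fin n} (σ : Equiv.Perm (Fin n))
    (hσ : ∀ x : Fin n, x.val < k.val + 1 → σ x = x) :
    ∀ y : Fin n, k < y → k < σ y := by
  intro y hy
  by_contra hc
  push_neg at hc
  have h1 : σ (σ y) = σ y := hσ (σ y) (Nat.lt_succ_of_le (Fin.le_def.1 hc))
  have h2 : σ y = y := σ.injective h1
  rw [h2] at hc
  exact absurd hy (not_lt.2 hc)

lemma Piop_mul_Pop (k : Fin n) (τ : Equiv.Perm (Fin n))
    (hτ : ∀ x : Fin n, x.val < k.val + 1 → τ x = x) :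
    (Piop k : Op A n) * Pop τ = Pop τ * Piop k := by
  have hτinv : ∀ x : Fin n, x.val < k.val + 1 → τ⁻¹ x = x := by
    intro x hx
    exact (Equiv.Perm.inv_eq_iff_eq.2 (hτ x hx).symm)
  rw [Piop, sub_mul, one_mul, mul_sub, mul_one, Matrix.smul_mul, Matrix.mul_smul]
  congr 1
  rw [Finset.sum_mul, Finset.mul_sum]
  have hterm : ∀ i ∈ Finset.univ.filter (fun i => k < i),
      (Pij k i : Op A n) * Pop τ = Pop τ * Pij k (τ⁻¹ i) := by
    intro i hi
    rw [Pij, Pij, Pop_mul, Pop_mul]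
    have hsw : Equiv.swap k i * τ = τ * Equiv.swap k (τ⁻¹ i) := by
      rw [Equiv.mul_swap_eq_swap_mul τ k (τ⁻¹ i), hτ k (by omega)]; simp
    rw [hsw]
  rw [Finset.sum_congr rfl hterm]
  congr 1
  apply Finset.sum_nbij' (fun i => τ⁻¹ i) (fun i => τ i)
  · intro x hx
    simp only [Finset.mem_filter, Finset.mem_univ, true_and] at hx ⊢
    exact perm_stab τ⁻¹ hτinv x hx
  · intro x hx
    simp only [Finset.mem_filter, Finset.mem_univ, true_and] at hx ⊢
    exact perm_stab τ hτ x hx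
  · intro i _; simp
  · intro i _; simp
  · intro i _; rfl

lemma take_finRange_succ (C : Fin n → Matrix (Fin n) (Fin n) A) {m : ℕ} (hm : m < n) :
    Pre C (m + 1) = Pre C m * (act (C ⟨m, hm⟩) ⟨m, hm⟩ * Piop ⟨m, hm⟩) := by
  rw [Pre, Pre, List.take_succ]
  have hlen : m < (List.finRange n).length := by simpa using hm
  rw [List.getElem?_eq_getElem hlen, finRange_getElem m hm]
  simp

lemma act_mul_Pop_comm (C : Matrix (Fin n) (Fin n) A) (s : Fin n) (τ : Equiv.Perm (Fin n))
    (hs : τ s = s) : act C s * Pop τ = Pop τ * act C s := by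
  rw [Pop_mul_act τ C s, hs]

lemma Hlem (C : Fin n → Matrix (Fin n) (Fin n) A) :
    ∀ m : ℕ, ∀ τ : Equiv.Perm (Fin n), (∀ x : Fin n, x.val < m → τ x = x) →
    (antisym * Pre C m) * Pop τ = sgnK τ • (antisym * Pre C m) := by
  intro m
  induction m with
  | zero =>
    intro τ _
    rw [Pre]
    simp only [List.take_zero, List.map_nil, List.prod_nil, mul_one]
    exact antisym_mul_Pop τ
  | succ m ih =>
    intro τ hτ
    by_cases hm : m < n
    · rw [take_finRange_succ C hm]
      have hsfix : τ ⟨m, hm⟩ = ⟨m, hm⟩ := hτ _ (by simp)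
      rw [← mul_assoc, mul_assoc _ _ (Pop τ), mul_assoc (act _ _) _ (Pop τ),
        Piop_mul_Pop _ τ (fun x hx => hτ x (by simpa using hx)),
        ← mul_assoc (act _ _), act_mul_Pop_comm _ _ τ hsfix,
        mul_assoc (Pop τ), ← mul_assoc _ (Pop τ),
        ih τ (fun x hx => hτ x (by omega)), smul_mul_assoc]
    · have heq : Pre C (m + 1) = Pre C m := by
        rw [Pre, Pre, List.take_of_length_le (by simp; omega),
          List.take_of_length_le (by simp; omega)]
      rw [heq]
      exact ih τ (fun x hx => hτ x (by omega))

lemma Rrow_eq (s : Fin n) :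
    (Rrow s : Op A n) = ((lsuf n (s.val + 1)).map (fun i => Rop s i)).prod := by
  have hfil : (List.finRange n).filter (fun i => decide (s < i)) = lsuf n (s.val + 1) := by
    rw [lsuf]
    apply List.filter_congr
    intro a _
    apply decide_eq_decide.mpr
    rw [Fin.lt_def]
    omega
  rw [Rrow, hfil]

lemma Piop_eq (s : Fin n) :
    (Piop s : Op A n) = 1 - ((2 * u - ((s : ℕ) + 1 : K) - (n : K) + 2)⁻¹ : K) •
      ∑ i ∈ fsuf n (s.val + 1), Pij s i := by
  have hfil : Finset.univ.filter (fun i : Fin n => s < i) = fsuf n (s.val + 1) := by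
    rw [fsuf]
    apply Finset.filter_congr
    intro a _
    rw [Fin.lt_def]
    omega
  rw [Piop, hfil]

lemma core (C : Fin n → Matrix (Fin n) (Fin n) A) (m : ℕ) (hm : m < n) :
    antisym * Pre C m * (act (C ⟨m, hm⟩) ⟨m, hm⟩ * Rrow ⟨m, hm⟩)
      = antisym * Pre C m * (act (C ⟨m, hm⟩) ⟨m, hm⟩ * Piop ⟨m, hm⟩) := by
  set sm : Fin n := ⟨m, hm⟩ with hsm
  have hWprop : ∀ τ : Equiv.Perm (Fin n), (∀ x : Fin n, x.val < m + 1 → τ x = x) →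
      (antisym * Pre C m * act (C sm) sm) * Pop τ
        = sgnK τ • (antisym * Pre C m * act (C sm) sm) := by
    intro τ hτ
    have hsfix : τ sm = sm := hτ _ (by simp [hsm])
    rw [mul_assoc, act_mul_Pop_comm _ _ τ hsfix, ← mul_assoc,
      Hlem C m τ (fun x hx => hτ x (by omega)), smul_mul_assoc]
  have hRL := RL sm (n - (m + 1)) (m + 1) (by omega) (by simp [hsm])
    (antisym * Pre C m * act (C sm) sm) hWprop
  rw [← mul_assoc, ← mul_assoc, Rrow_eq, hRL, Piop_eq, mul_assoc, mul_assoc]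

theorem antisym_bra_eq_antisym_braket (hn : 1 ≤ n)
    (C : Fin n → Matrix (Fin n) (Fin n) A) :
    antisym * bra C = antisym * braket C := by
  have key : ∀ m, m ≤ n → antisym * bra C
      = antisym * Pre C m *
        (((List.finRange n).drop m).map (fun s => act (C s) s * Rrow s)).prod := by
    intro m
    induction m with
    | zero =>
      intro _
      rw [Pre]
      simp only [List.take_zero, List.map_nil, List.prod_nil, mul_one, List.drop_zero]
      rw [bra]
    | succ m ih =>
      intro h
      have hm : m < n := by omega
      rw [ih (by omega)]
      have hdrop : (List.finRange n).drop m = ⟨m, hm⟩ :: (List.finRange n).drop (m + 1) := by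
        rw [List.drop_eq_getElem_cons (by simpa using hm), finRange_getElem m hm]
      rw [hdrop, List.map_cons, List.prod_cons, ← mul_assoc, core C m hm,
        take_finRange_succ C hm, ← mul_assoc]
      simp only [mul_assoc]
  have hfin := key n le_rfl
  rw [hfin, List.drop_eq_nil_of_le (by simp), List.map_nil, List.prod_nil, mul_one,
    Pre, List.take_of_length_le (by simp), braket]

end
end

section
/- For 1 ≤ k < i₁ < i₂ < ⋯ < i_m ≤ n with m ≥ 1, in the group algebra K[S_n] one has A'_{n−k}·(k,i₁)·(k,i₂)⋯(k,i_m) = (−1)^{m−1}·A'_{n−k}·(k,i₁). -/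
/-!
STATEMENT 2: For 1 ≤ k < i₁ < ⋯ < i_m ≤ n with m ≥ 1, in K[S_n],
A'_{n−k}·(k,i₁)·(k,i₂)⋯(k,i_m) = (−1)^{m−1}·A'_{n−k}·(k,i₁).
The point `i : Fin n` carries the label `i+1`; the m ≥ 1 elements
i₁ < ⋯ < i_m are encoded as a strictly monotone map `i : Fin (m+1) → Fin n`
(so the paper's m is `m+1` here and (−1)^{m−1} is `(−1)^m`).
-/

noncomputable section

variable {n : ℕ}

/-- The transposition (a,b) as an element of the group algebra K[S_n]. -/
def T (a b : Fin n) : MonoidAlgebra K (Equiv.Perm (Fin n)) :=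
  MonoidAlgebra.of K (Equiv.Perm (Fin n)) (Equiv.swap a b)

/-- `Aprime m` = A'_{n−m}: the signed sum of all permutations fixing the
points with labels 1,…,m (i.e. the points `i : Fin n` with `(i:ℕ) < m`). -/
def Aprime (m : ℕ) : MonoidAlgebra K (Equiv.Perm (Fin n)) :=
  ∑ σ ∈ Finset.univ.filter (fun σ : Equiv.Perm (Fin n) => ∀ i : Fin n, (i : ℕ) < m → σ i = i),
    (((Equiv.Perm.sign σ : ℤ) : K)) • MonoidAlgebra.of K (Equiv.Perm (Fin n)) σ

lemma swapProd_fix (k : Fin n) (L : List (Fin n)) (j : Fin n) (hj : j ≠ k)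
    (hL : ∀ a ∈ L, j ≠ a) :
    ((L.map (fun a => Equiv.swap k a)).prod) j = j := by
  induction L with
  | nil => simp
  | cons a L ih =>
      simp only [List.map_cons, List.prod_cons, Equiv.Perm.mul_apply]
      rw [ih (fun b hb => hL b (List.mem_cons_of_mem _ hb)),
        Equiv.swap_apply_of_ne_of_ne hj (hL a List.mem_cons_self)]

lemma swapProd_sign (k : Fin n) (L : List (Fin n)) (hL : ∀ a ∈ L, a ≠ k) :
    Equiv.Perm.sign ((L.map (fun a => Equiv.swap k a)).prod) = (-1) ^ L.length := by
  induction L with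
  | nil => simp
  | cons a L ih =>
      simp only [List.map_cons, List.prod_cons, map_mul, List.length_cons]
      rw [ih (fun b hb => hL b (List.mem_cons_of_mem _ hb)),
        Equiv.Perm.sign_swap (Ne.symm (hL a List.mem_cons_self))]
      rw [pow_add, pow_one, mul_comm]

lemma aprime_mul_of (M : ℕ) (σ : Equiv.Perm (Fin n))
    (hσ : ∀ i : Fin n, (i : ℕ) < M → σ i = i) :
    Aprime M * MonoidAlgebra.of K (Equiv.Perm (Fin n)) σ
      = ((Equiv.Perm.sign σ : ℤ) : K) • (Aprime (n := n) M) := by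
  have hsq : ((Equiv.Perm.sign σ : ℤ) : K) * ((Equiv.Perm.sign σ : ℤ) : K) = 1 := by
    rcases Int.units_eq_one_or (Equiv.Perm.sign σ) with h | h <;> rw [h] <;> norm_num
  unfold Aprime
  rw [Finset.sum_mul, Finset.smul_sum]
  refine Finset.sum_bij (fun τ _ => τ * σ) ?_ ?_ ?_ ?_
  · intro τ hτ
    simp only [Finset.mem_filter, Finset.mem_univ, true_and] at hτ ⊢
    intro j hj
    rw [Equiv.Perm.mul_apply, hσ j hj, hτ j hj]
  · intro a _ b _ h
    exact mul_right_cancel h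
  · intro b hb
    simp only [Finset.mem_filter, Finset.mem_univ, true_and] at hb
    refine ⟨b * σ⁻¹, ?_, by simp⟩
    simp only [Finset.mem_filter, Finset.mem_univ, true_and]
    intro j hj
    have hinv : σ⁻¹ j = j := by
      conv_lhs => rw [← hσ j hj]
      simp
    rw [Equiv.Perm.mul_apply, hinv, hb j hj]
  · intro τ hτ
    rcases Int.units_eq_one_or (Equiv.Perm.sign σ) with h | h <;>
      rcases Int.units_eq_one_or (Equiv.Perm.sign τ) with h' | h' <;>
        simp [map_mul, h, h', smul_mul_assoc]

theorem aprime_mul_swaps (k : Fin n) (m : ℕ) (i : Fin (m + 1) → Fin n)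
    (hmono : StrictMono i) (hk : k < i 0) :
    Aprime ((k : ℕ) + 1) * ((List.finRange (m + 1)).map (fun t => T k (i t))).prod =
      ((-1 : K) ^ m) • (Aprime ((k : ℕ) + 1) * T k (i 0)) := by
  classical
  set L : List (Fin n) := (List.finRange (m + 1)).map i with hLdef
  have hki : ∀ t : Fin (m+1), k < i t := fun t => lt_of_lt_of_le hk (hmono.monotone (Fin.zero_le t))
  have hLk : ∀ a ∈ L, a ≠ k := by
    intro a ha
    rcases List.mem_map.1 ha with ⟨t, _, rfl⟩
    exact (hki t).ne'
  set π : Equiv.Perm (Fin n) := ((L.map (fun a => Equiv.swap k a)).prod) with hπ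
  have hprod : ((List.finRange (m + 1)).map (fun t => T k (i t))).prod
      = MonoidAlgebra.of K (Equiv.Perm (Fin n)) π := by
    rw [hπ, hLdef, List.map_map,
      map_list_prod (MonoidAlgebra.of K (Equiv.Perm (Fin n))), List.map_map]
    rfl
  set τ : Equiv.Perm (Fin n) := π * Equiv.swap k (i 0) with hτ
  have hπτ : π = τ * Equiv.swap k (i 0) := by
    rw [hτ, mul_assoc, Equiv.swap_mul_self, mul_one]
  -- τ fixes all points with index < k+1
  have hfix : ∀ j : Fin n, (j : ℕ) < (k : ℕ) + 1 → τ j = j := by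
    intro j hj
    rcases lt_or_eq_of_le (Nat.lt_succ_iff.1 hj) with hjk | hjk
    · have hjk' : j ≠ k := fun h => absurd (congrArg Fin.val h) (Nat.ne_of_lt hjk)
      have hjL : ∀ a ∈ L, j ≠ a := by
        intro a ha
        rcases List.mem_map.1 ha with ⟨t, _, rfl⟩
        exact fun h => absurd (congrArg Fin.val h) (Nat.ne_of_lt (lt_trans hjk (hki t)))
      rw [hτ, Equiv.Perm.mul_apply,
        Equiv.swap_apply_of_ne_of_ne hjk' (hjL (i 0) (by
          rw [hLdef]; exact List.mem_map.2 ⟨0, List.mem_finRange 0, rfl⟩)),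
        swapProd_fix k L j hjk' hjL]
    · have hj' : j = k := Fin.ext hjk
      rw [hj', hτ, Equiv.Perm.mul_apply, Equiv.swap_apply_left]
      -- π (i 0) = k : peel the first factor
      have hL0 : L = i 0 :: (List.finRange m).map (fun t => i t.succ) := by
        rw [hLdef, List.finRange_succ, List.map_cons, List.map_map]
        rfl
      rw [hπ, hL0]
      simp only [List.map_cons, List.prod_cons, Equiv.Perm.mul_apply]
      rw [swapProd_fix k _ (i 0) (hki 0).ne']
      · exact Equiv.swap_apply_right k (i 0)
      · intro a ha
        rcases List.mem_map.1 ha with ⟨t, _, rfl⟩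
        exact (hmono (Fin.succ_pos t)).ne
  have hsign : Equiv.Perm.sign τ = (-1) ^ m := by
    rw [hτ, map_mul, swapProd_sign k L hLk, Equiv.Perm.sign_swap (hki 0).ne,
      hLdef, List.length_map, List.length_finRange, pow_succ, mul_assoc]
    simp
  calc Aprime ((k : ℕ) + 1) * ((List.finRange (m + 1)).map (fun t => T k (i t))).prod
      = Aprime ((k : ℕ) + 1) * MonoidAlgebra.of K (Equiv.Perm (Fin n)) τ * T k (i 0) := by
        rw [hprod, hπτ, map_mul, ← mul_assoc]; rfl
    _ = ((-1 : K) ^ m) • (Aprime ((k : ℕ) + 1) * T k (i 0)) := by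
        rw [aprime_mul_of _ τ hfix, hsign, smul_mul_assoc]
        norm_num
end
end

section
/- Let η ∈ I_n. Write Im(η) = {N_1,…,N_K}; for each l write the preimage η⁻¹(N_l) = {a_{l,1} < a_{l,2} < ⋯ < a_{l,m_l}} and let Γ_l be the cyclic permutation (a_{l,1}, a_{l,2}, …, a_{l,m_l}); set γ_η := Γ_1∘⋯∘Γ_K (a product of disjoint increasing cycles), G_η^- := {a_{l,1} : l = 1,…,K} (the set of cycle minima), and G_η^+ := {a_{l,m_l} : l = 1,…,K} (the set of cycle maxima). Let S(η) be the set of permutations of {1,…,n} fixing every point outside Im(η), and M_η := C_1^(η(1))·C_2^(η(2))⋯C_n^(η(n)). Then for every σ ∈ S(η) and arbitrary n×n matrices C_1,…,C_n over A, the entry of M_η at row tuple (σ(1),…,σ(n)) and column tuple (1,…,n) equals ∑_s ∏_{k=1}^n (C_k)_{p(k),q(k)}, where the sum runs over all functions s : {1,…,n} ∖ G_η^- → {1,…,n}, and p(k) := σ(η(k)) if k ∈ G_η^- and p(k) := s(k) otherwise, while q(k) := η(k) if k ∈ G_η^+ and q(k) := s(γ_η(k)) otherwise. -/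
/-!
STATEMENT 13: The entry of M_η = C_1^(η(1))⋯C_n^(η(n)) at row tuple
(σ(1),…,σ(n)) and column tuple (1,…,n), for σ ∈ S(η), equals
∑_s ∏_{k=1}^n (C_k)_{p(k),q(k)}, the sum over functions
s : {1,…,n} ∖ G_η^- → {1,…,n}, with p(k) = σ(η(k)) for k ∈ G_η^-, p(k) = s(k)
otherwise; q(k) = η(k) for k ∈ G_η^+, q(k) = s(γ_η(k)) otherwise.
Here G_η^- (resp. G_η^+) is the set of minima (resp. maxima) of the fibers of η,
and γ_η sends each fiber element to the next one cyclically (in increasing order).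
The point `i : Fin n` carries the label `i+1`.
-/

noncomputable section

variable {A : Type*} [Ring A] [Algebra K A] {n : ℕ}

/-- M_η = C_1^(η(1))·C_2^(η(2))⋯C_n^(η(n)). -/
def Mmat (C : Fin n → Matrix (Fin n) (Fin n) A) (η : Fin n → Fin n) : Op A n :=
  ((List.finRange n).map (fun s => act (C s) (η s))).prod

/-- G_η^-: the elements that are minimal in their fiber of η
(the minima a_{l,1} of the cycles of γ_η). -/
def Gminus (η : Fin n → Fin n) : Finset (Fin n) :=
  Finset.univ.filter (fun k => ∀ j, η j = η k → k ≤ j)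

/-- G_η^+: the elements that are maximal in their fiber of η
(the maxima a_{l,m_l} of the cycles of γ_η). -/
def Gplus (η : Fin n → Fin n) : Finset (Fin n) :=
  Finset.univ.filter (fun k => ∀ j, η j = η k → j ≤ k)

/-- γ_η: each fiber {a_{l,1} < ⋯ < a_{l,m_l}} of η is permuted by the
increasing cycle (a_{l,1},…,a_{l,m_l}); i.e. k is sent to the smallest fiber
element larger than k, or to the smallest fiber element when k is the largest. -/
def gam (η : Fin n → Fin n) (k : Fin n) : Fin n :=
  if h : (Finset.univ.filter (fun j => η j = η k ∧ k < j)).Nonempty then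
    (Finset.univ.filter (fun j => η j = η k ∧ k < j)).min' h
  else
    (Finset.univ.filter (fun j => η j = η k)).min'
      ⟨k, by simp⟩

/-- Extension of s : {1,…,n} ∖ G_η^- → {1,…,n} to all of {1,…,n}
(the values on G_η^- are irrelevant junk). -/
def sext (η : Fin n → Fin n) (s : {k : Fin n // k ∉ Gminus η} → Fin n)
    (k : Fin n) : Fin n :=
  if h : k ∈ Gminus η then k else s ⟨k, h⟩


lemma prod_entry {S : Type*} [Fintype S] [DecidableEq S] {A : Type*} [Semiring A] :
    ∀ (m : ℕ) (Ms : Fin m → Matrix S S A) (f g : S),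
    (List.ofFn Ms).prod f g = ∑ h : Fin (m + 1) → S,
      if h 0 = f ∧ h (Fin.last m) = g then
        (List.ofFn fun i : Fin m => Ms i (h i.castSucc) (h i.succ)).prod
      else 0 := by
  intro m
  induction m with
  | zero =>
    intro Ms f g
    have e1 : (∑ x : S, if x = f ∧ x = g then (1:A) else 0) =
        ∑ h : Fin (0 + 1) → S,
          if h 0 = f ∧ h (Fin.last 0) = g then
            (List.ofFn fun i : Fin 0 => Ms i (h i.castSucc) (h i.succ)).prod
          else 0 := by
      refine Fintype.sum_equiv (Equiv.funUnique (Fin 1) S).symm _ _ fun x => ?_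
      have : Fin.last 0 = 0 := rfl
      simp [this, Equiv.funUnique]
    rw [List.ofFn_zero, List.prod_nil, Matrix.one_apply, ← e1]
    by_cases hfg : f = g
    · subst hfg; simp
    · rw [if_neg hfg, Finset.sum_eq_zero]
      intro x _
      rw [if_neg]
      rintro ⟨h1, h2⟩; exact hfg (h1.symm.trans h2)
  | succ m ih =>
    intro Ms f g
    have e1 : (∑ p : S × (Fin (m + 1) → S),
        (if p.1 = f ∧ p.2 (Fin.last m) = g then
          Ms 0 p.1 (p.2 0) * (List.ofFn fun i : Fin m => Ms i.succ (p.2 i.castSucc) (p.2 i.succ)).prod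
        else 0)) =
        ∑ h : Fin (m + 1 + 1) → S,
          if h 0 = f ∧ h (Fin.last (m+1)) = g then
            (List.ofFn fun i : Fin (m+1) => Ms i (h i.castSucc) (h i.succ)).prod
          else 0 := by
      refine Fintype.sum_equiv (Fin.consEquiv (fun _ : Fin (m + 1 + 1) => S)) _ _ fun p => ?_
      obtain ⟨x, t⟩ := p
      simp only [Fin.consEquiv, Equiv.coe_fn_mk]
      have hlast : (Fin.cons x t : Fin (m+1+1) → S) (Fin.last (m+1)) = t (Fin.last m) := by
        have h2 : Fin.last (m+1) = (Fin.last m).succ := rfl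
        rw [h2, Fin.cons_succ]
      simp only [Fin.cons_zero, hlast]
      rcases Decidable.em (x = f ∧ t (Fin.last m) = g) with hc | hc
      · rw [if_pos hc, if_pos hc]
        rw [List.ofFn_succ]
        simp only [List.prod_cons, Fin.castSucc_zero, Fin.cons_zero, ← Fin.succ_castSucc,
          Fin.cons_succ]
      · rw [if_neg hc, if_neg hc]
    rw [List.ofFn_succ, List.prod_cons, Matrix.mul_apply, ← e1, Fintype.sum_prod_type]
    have e3 : ∀ x : S, (∑ y : Fin (m+1) → S,
        if x = f ∧ y (Fin.last m) = g then
          Ms 0 x (y 0) * (List.ofFn fun i : Fin m => Ms i.succ (y i.castSucc) (y i.succ)).prod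
        else 0) =
        if x = f then (∑ y : Fin (m+1) → S,
          if y (Fin.last m) = g then
            Ms 0 x (y 0) * (List.ofFn fun i : Fin m => Ms i.succ (y i.castSucc) (y i.succ)).prod
          else 0) else 0 := by
      intro x
      by_cases hx : x = f
      · rw [if_pos hx]; simp only [hx, true_and]
      · simp only [hx, false_and, if_neg hx, if_false, Finset.sum_const_zero]
    rw [Finset.sum_congr rfl (fun x _ => e3 x), Finset.sum_ite_eq' Finset.univ f, if_pos (Finset.mem_univ f)]
    simp_rw [ih (fun i => Ms i.succ), Finset.mul_sum, mul_ite, mul_zero]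
    rw [Finset.sum_comm]
    refine Finset.sum_congr rfl fun y _ => ?_
    simp_rw [ite_and]
    rw [Finset.sum_ite_eq Finset.univ (y 0) (fun x => if y (Fin.last m) = g then Ms 0 f x * _ else 0), if_pos (Finset.mem_univ _)]


/-! ### Auxiliary lemmas -/

lemma mem_Gminus {η : Fin n → Fin n} {k : Fin n} :
    k ∈ Gminus η ↔ ∀ j, η j = η k → k ≤ j := by simp [Gminus]

lemma mem_Gplus {η : Fin n → Fin n} {k : Fin n} :
    k ∈ Gplus η ↔ ∀ j, η j = η k → j ≤ k := by simp [Gplus]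

lemma not_mem_Gminus {η : Fin n → Fin n} {k : Fin n} :
    k ∉ Gminus η ↔ ∃ j, η j = η k ∧ j < k := by
  simp [mem_Gminus, not_forall, not_le]

lemma not_mem_Gplus {η : Fin n → Fin n} {k : Fin n} :
    k ∉ Gplus η ↔ ∃ j, η j = η k ∧ k < j := by
  simp [mem_Gplus, not_forall, not_le]

lemma gam_spec {η : Fin n → Fin n} {k : Fin n} (hk : k ∉ Gplus η) :
    η (gam η k) = η k ∧ k < gam η k ∧ ∀ j, η j = η k → k < j → gam η k ≤ j := by
  have hne : (Finset.univ.filter (fun j => η j = η k ∧ k < j)).Nonempty := by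
    obtain ⟨j, hj1, hj2⟩ := not_mem_Gplus.mp hk
    exact ⟨j, by simp [hj1, hj2]⟩
  rw [gam, dif_pos hne]
  have h1 := Finset.min'_mem _ hne
  simp only [Finset.mem_filter, Finset.mem_univ, true_and] at h1
  exact ⟨h1.1, h1.2, fun j hj1 hj2 => Finset.min'_le _ _ (by simp [hj1, hj2])⟩

lemma gam_not_mem_Gminus {η : Fin n → Fin n} {k : Fin n} (hk : k ∉ Gplus η) :
    gam η k ∉ Gminus η := by
  obtain ⟨h1, h2, _⟩ := gam_spec hk
  exact not_mem_Gminus.mpr ⟨k, h1.symm, h2⟩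

def Pset (η : Fin n → Fin n) (N : Fin n) (m : ℕ) : Finset (Fin n) :=
  Finset.univ.filter (fun j => j.val < m ∧ η j = N)

lemma mem_Pset {η : Fin n → Fin n} {N : Fin n} {m : ℕ} {j : Fin n} :
    j ∈ Pset η N m ↔ j.val < m ∧ η j = N := by simp [Pset]

/-- The chain of intermediate states built from the data `s`. -/
def chainOf (η : Fin n → Fin n) (σ : Equiv.Perm (Fin n))
    (s : {k : Fin n // k ∉ Gminus η} → Fin n) (m : ℕ) (N : Fin n) : Fin n :=
  if h : (Pset η N m).Nonempty then
    (if (Pset η N m).max' h ∈ Gplus η then N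
     else sext η s (gam η ((Pset η N m).max' h)))
  else σ N

section ChainLemmas

variable {η : Fin n → Fin n} {σ : Equiv.Perm (Fin n)}
  {s : {k : Fin n // k ∉ Gminus η} → Fin n}

lemma chainOf_zero (N : Fin n) : chainOf η σ s 0 N = σ N := by
  rw [chainOf, dif_neg]
  rintro ⟨j, hj⟩
  exact Nat.not_lt_zero _ (mem_Pset.mp hj).1

lemma chainOf_last (hσ : ∀ j, (∀ i, η i ≠ j) → σ j = j) (N : Fin n) :
    chainOf η σ s n N = N := by
  by_cases hne : (Pset η N n).Nonempty
  · rw [chainOf, dif_pos hne, if_pos]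
    have hj := mem_Pset.mp (Finset.max'_mem _ hne)
    refine mem_Gplus.mpr fun i hi => ?_
    exact Finset.le_max' _ _ (mem_Pset.mpr ⟨i.isLt, hi.trans hj.2⟩)
  · rw [chainOf, dif_neg hne]
    refine hσ N fun i hi => ?_
    exact hne ⟨i, mem_Pset.mpr ⟨i.isLt, hi⟩⟩

lemma chainOf_succ_self (k : Fin n) :
    chainOf η σ s (k.val + 1) (η k) =
      if k ∈ Gplus η then η k else sext η s (gam η k) := by
  have hk : k ∈ Pset η (η k) (k.val + 1) := mem_Pset.mpr ⟨Nat.lt_succ_self _, rfl⟩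
  have hne : (Pset η (η k) (k.val + 1)).Nonempty := ⟨k, hk⟩
  have hmax : (Pset η (η k) (k.val + 1)).max' hne = k := by
    refine le_antisymm ?_ (Finset.le_max' _ _ hk)
    have := (mem_Pset.mp (Finset.max'_mem _ hne)).1
    exact Fin.le_def.mpr (Nat.lt_succ_iff.mp this)
  rw [chainOf, dif_pos hne, hmax]

lemma chainOf_self (k : Fin n) :
    chainOf η σ s k.val (η k) =
      if k ∈ Gminus η then σ (η k) else sext η s k := by
  by_cases hGm : k ∈ Gminus η
  · rw [if_pos hGm, chainOf, dif_neg]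
    rintro ⟨j, hj⟩
    obtain ⟨hj1, hj2⟩ := mem_Pset.mp hj
    exact absurd (mem_Gminus.mp hGm j hj2) (not_le.mpr (Fin.lt_def.mpr hj1))
  · rw [if_neg hGm]
    obtain ⟨j0, hj01, hj02⟩ := not_mem_Gminus.mp hGm
    have hne : (Pset η (η k) k.val).Nonempty :=
      ⟨j0, mem_Pset.mpr ⟨Fin.lt_def.mp hj02, hj01⟩⟩
    set j := (Pset η (η k) k.val).max' hne with hjdef
    obtain ⟨hj1, hj2⟩ := mem_Pset.mp (Finset.max'_mem _ hne)
    have hjk : j < k := Fin.lt_def.mpr hj1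
    have hGp : j ∉ Gplus η := not_mem_Gplus.mpr ⟨k, hj2.symm, hjk⟩
    obtain ⟨hg1, hg2, hg3⟩ := gam_spec hGp
    have hgam : gam η j = k := by
      refine le_antisymm (hg3 k (hj2.symm) hjk) ?_
      by_contra hlt
      have hmem : gam η j ∈ Pset η (η k) k.val :=
        mem_Pset.mpr ⟨Fin.lt_def.mp (not_le.mp hlt), hg1.trans hj2⟩
      exact absurd (Finset.le_max' _ _ hmem) (not_le.mpr hg2)
    rw [chainOf, dif_pos hne, if_neg hGp, ← hjdef, hgam]

lemma chainOf_step_ne (k : Fin n) (t : Fin n) (ht : t ≠ η k) :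
    chainOf η σ s k.val t = chainOf η σ s (k.val + 1) t := by
  have hP : Pset η t k.val = Pset η t (k.val + 1) := by
    ext j
    simp only [mem_Pset]
    constructor
    · rintro ⟨h1, h2⟩; exact ⟨h1.trans (Nat.lt_succ_self _), h2⟩
    · rintro ⟨h1, h2⟩
      refine ⟨?_, h2⟩
      rcases Nat.lt_succ_iff_lt_or_eq.mp h1 with h | h
      · exact h
      · exact absurd (Fin.ext h ▸ h2 : η k = t) (Ne.symm ht)
  rw [chainOf, chainOf, hP]

lemma chain_const (h : Fin (n+1) → Fin n → Fin n)
    (compat : ∀ k : Fin n, ∀ t, t ≠ η k → h k.castSucc t = h k.succ t)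
    (N : Fin n) (m₁ m₂ : ℕ) (h1 : m₁ ≤ m₂) (h2 : m₂ ≤ n)
    (hst : ∀ j : Fin n, m₁ ≤ j.val → j.val < m₂ → η j ≠ N) :
    h ⟨m₁, by omega⟩ N = h ⟨m₂, by omega⟩ N := by
  induction m₂, h1 using Nat.le_induction with
  | base => rfl
  | succ m₂ hm ih =>
    have hmn : m₂ < n := by omega
    have step : h ⟨m₂, by omega⟩ N = h ⟨m₂ + 1, by omega⟩ N := by
      have := compat ⟨m₂, hmn⟩ N
        (fun hc => hst ⟨m₂, hmn⟩ (by simpa using hm) (by simp) hc.symm)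
      simpa [Fin.castSucc_mk, Fin.succ_mk] using this
    rw [← step]
    exact ih (by omega) (fun j hj1 hj2 => hst j hj1 (by omega))

lemma chain_eq (h : Fin (n+1) → Fin n → Fin n)
    (hσ : ∀ j, (∀ i, η i ≠ j) → σ j = j)
    (h0 : h 0 = fun t => σ t) (hl : h (Fin.last n) = fun t => t)
    (compat : ∀ k : Fin n, ∀ t, t ≠ η k → h k.castSucc t = h k.succ t)
    (m : Fin (n+1)) :
    h m = fun N => chainOf η σ
      (fun k : {k : Fin n // k ∉ Gminus η} => h (k.1.castSucc) (η k.1)) m.val N := by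
  set s : {k : Fin n // k ∉ Gminus η} → Fin n :=
    fun k => h (k.1.castSucc) (η k.1) with hs
  funext N
  have hmn : m.val ≤ n := Fin.is_le m
  have hm_eq : (⟨m.val, by omega⟩ : Fin (n+1)) = m := Fin.ext rfl
  by_cases hne : (Pset η N m.val).Nonempty
  · set j := (Pset η N m.val).max' hne with hjdef
    obtain ⟨hj1, hj2⟩ := mem_Pset.mp (Finset.max'_mem _ hne)
    by_cases hGp : j ∈ Gplus η
    · rw [chainOf, dif_pos hne, ← hjdef, if_pos hGp]
      have hc := chain_const h compat N m.val n hmn le_rfl (fun i hi1 hi2 hi3 => by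
        have : i ≤ j := mem_Gplus.mp hGp i (hi3.trans hj2.symm)
        omega)
      rw [hm_eq] at hc
      have : (⟨n, by omega⟩ : Fin (n+1)) = Fin.last n := rfl
      rw [hc, this, hl]
    · rw [chainOf, dif_pos hne, ← hjdef, if_neg hGp]
      obtain ⟨hg1, hg2, hg3⟩ := gam_spec hGp
      have hgm : gam η j ∉ Gminus η := gam_not_mem_Gminus hGp
      have hmg : m.val ≤ (gam η j).val := by
        by_contra hlt
        have hmem : gam η j ∈ Pset η N m.val :=
          mem_Pset.mpr ⟨by omega, hg1.trans hj2⟩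
        exact absurd (Finset.le_max' _ _ hmem) (not_le.mpr hg2)
      have hc := chain_const h compat N m.val (gam η j).val hmg
        (Nat.le_of_lt (gam η j).isLt) (fun i hi1 hi2 hi3 => by
          have hij : η i = η j := hi3.trans hj2.symm
          rcases le_or_gt i j with hle | hgt
          · have := Fin.le_def.mp hle; omega
          · have := Fin.le_def.mp (hg3 i hij hgt); omega)
      rw [hm_eq] at hc
      rw [hc, sext, dif_neg hgm]
      show h ⟨(gam η j).val, by omega⟩ N = h ((gam η j).castSucc) (η (gam η j))
      rw [hg1.trans hj2]
      congr 1
  · rw [chainOf, dif_neg hne]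
    have hc := chain_const h compat N 0 m.val (Nat.zero_le _) hmn (fun i hi1 hi2 hi3 => by
      exact hne ⟨i, mem_Pset.mpr ⟨hi2, hi3⟩⟩)
    have h00 : (⟨0, by omega⟩ : Fin (n+1)) = 0 := rfl
    rw [h00, hm_eq] at hc
    rw [← hc, h0]

end ChainLemmas


theorem Mmat_entry (hn : 1 ≤ n) (C : Fin n → Matrix (Fin n) (Fin n) A)
    (η : Fin n → Fin n) (hη : ∀ i, i ≤ η i) (σ : Equiv.Perm (Fin n))
    (hσ : ∀ j, (∀ i, η i ≠ j) → σ j = j) :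
    (Mmat C η : Op A n) (fun t => σ t) (fun t => t) =
      ∑ s : ({k : Fin n // k ∉ Gminus η} → Fin n),
        ((List.finRange n).map (fun k =>
          C k (if k ∈ Gminus η then σ (η k) else sext η s k)
              (if k ∈ Gplus η then η k else sext η s (gam η k)))).prod := by
  classical
  rw [Mmat, ← List.ofFn_eq_map, prod_entry n (fun k => act (C k) (η k))]
  simp_rw [← List.ofFn_eq_map]
  set Phi : ({k : Fin n // k ∉ Gminus η} → Fin n) → (Fin (n+1) → Fin n → Fin n) :=
    fun s m => chainOf η σ s m.val with hPhi
  have hPhi0 : ∀ s, Phi s 0 = fun t => σ t := by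
    intro s; funext t
    show chainOf η σ s (0 : Fin (n+1)).val t = σ t
    rw [Fin.val_zero, chainOf_zero]
  have hPhiL : ∀ s, Phi s (Fin.last n) = fun t => t := by
    intro s; funext t
    show chainOf η σ s (Fin.last n).val t = t
    rw [Fin.val_last, chainOf_last hσ]
  have hPhiC : ∀ s, ∀ k : Fin n, ∀ t, t ≠ η k →
      Phi s k.castSucc t = Phi s k.succ t := by
    intro s k t ht
    show chainOf η σ s k.castSucc.val t = chainOf η σ s k.succ.val t
    rw [Fin.coe_castSucc, Fin.val_succ, chainOf_step_ne k t ht]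
  have hFval : ∀ s, (if Phi s 0 = (fun t => σ t) ∧ Phi s (Fin.last n) = (fun t => t) then
        (List.ofFn fun k : Fin n =>
          act (C k) (η k) (Phi s k.castSucc) (Phi s k.succ)).prod
      else 0) =
      (List.ofFn fun k : Fin n =>
        C k (if k ∈ Gminus η then σ (η k) else sext η s k)
            (if k ∈ Gplus η then η k else sext η s (gam η k))).prod := by
    intro s
    rw [if_pos ⟨hPhi0 s, hPhiL s⟩]
    refine congrArg List.prod (congrArg List.ofFn (funext fun k => ?_))
    rw [act]
    rw [if_pos (fun t ht => hPhiC s k t ht)]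
    have e1 : Phi s k.castSucc (η k) =
        (if k ∈ Gminus η then σ (η k) else sext η s k) := by
      show chainOf η σ s k.castSucc.val (η k) = _
      rw [Fin.coe_castSucc, chainOf_self]
    have e2 : Phi s k.succ (η k) =
        (if k ∈ Gplus η then η k else sext η s (gam η k)) := by
      show chainOf η σ s k.succ.val (η k) = _
      rw [Fin.val_succ, chainOf_succ_self]
    rw [e1, e2]
  have hGood : ∀ h : Fin (n+1) → Fin n → Fin n,
      (if h 0 = (fun t => σ t) ∧ h (Fin.last n) = (fun t => t) then
        (List.ofFn fun k : Fin n =>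
          act (C k) (η k) (h k.castSucc) (h k.succ)).prod
      else 0) ≠ 0 →
      (h 0 = (fun t => σ t)) ∧ (h (Fin.last n) = (fun t => t)) ∧
        (∀ k : Fin n, ∀ t, t ≠ η k → h k.castSucc t = h k.succ t) := by
    intro h hne
    by_cases hends : h 0 = (fun t => σ t) ∧ h (Fin.last n) = (fun t => t)
    · refine ⟨hends.1, hends.2, ?_⟩
      by_contra hc
      push_neg at hc
      obtain ⟨k, t, ht, hkt⟩ := hc
      have hzero : act (C k) (η k) (h k.castSucc) (h k.succ) = 0 := by
        rw [act, if_neg]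
        intro hall
        exact hkt (hall t ht)
      have : (List.ofFn fun k : Fin n =>
          act (C k) (η k) (h k.castSucc) (h k.succ)).prod = 0 :=
        List.prod_eq_zero (List.mem_ofFn.mpr ⟨k, hzero⟩)
      rw [if_pos hends, this] at hne
      exact hne rfl
    · rw [if_neg hends] at hne
      exact absurd rfl hne
  refine Finset.sum_bij_ne_zero
    (fun h _ _ => fun k : {k : Fin n // k ∉ Gminus η} => h (k.1.castSucc) (η k.1))
    (fun _ _ _ => Finset.mem_univ _) ?_ ?_ ?_
  · intro h₁ m₁ hne₁ h₂ m₂ hne₂ heq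
    obtain ⟨a1, b1, c1⟩ := hGood h₁ hne₁
    obtain ⟨a2, b2, c2⟩ := hGood h₂ hne₂
    have heq' : (fun k : {k : Fin n // k ∉ Gminus η} => h₁ (k.1.castSucc) (η k.1)) =
        (fun k : {k : Fin n // k ∉ Gminus η} => h₂ (k.1.castSucc) (η k.1)) := heq
    funext m
    rw [chain_eq h₁ hσ a1 b1 c1 m, chain_eq h₂ hσ a2 b2 c2 m, heq']
  · intro s _ hs
    refine ⟨Phi s, Finset.mem_univ _, ?_, ?_⟩
    · rw [hFval s]
      exact hs
    · funext k
      show chainOf η σ s (k.1.castSucc).val (η k.1) = s k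
      rw [Fin.coe_castSucc, chainOf_self, if_neg k.2, sext, dif_neg k.2]
  · intro h hm hne
    obtain ⟨a1, b1, c1⟩ := hGood h hne
    have hrec : h = Phi (fun k : {k : Fin n // k ∉ Gminus η} =>
        h (k.1.castSucc) (η k.1)) := by
      funext m
      exact chain_eq h hσ a1 b1 c1 m
    conv_lhs => rw [hrec]
    exact hFval _


end
end
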